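/- For any odd positive integers w1, w2, w3 and any nonnegative integer n: Σ_{k+l+m=n} (n choose k,l,m) T_k(w1 d − 1, χ) T_l(w2 d − 1, χ) T_m(w3 d − 1, χ) w3^{k} w1^{l} w2^{m} = Σ_{k+l+m=n} (n choose k,l,m) T_k(w1 d − 1, χ) T_l(w3 d − 1, χ) T_m(w2 d − 1, χ) w2^{k} w1^{l} w3^{m}. -/

import Mathlib

open Finset

/-- The formal exponential power series `e^{ct} = Σ cⁿ tⁿ/n!` in `ℂ[[t]]`. -/
noncomputable def expPS (c : ℂ) : PowerSeries ℂ :=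
  PowerSeries.mk fun n => c ^ n / n.factorial

/-- `Σ_{a=0}^{d-1} (-1)^a χ(a) e^{at}` as a formal power series. -/
noncomputable def altSum (χ : ℤ → ℂ) (d : ℕ) : PowerSeries ℂ :=
  ∑ a ∈ Finset.range d, ((-1 : ℂ) ^ a * χ (a : ℤ)) • expPS (a : ℂ)

/-- `E` is the family of generalized Euler polynomials attached to `χ` mod `d`:
`(Σ_{n≥0} E_{n,χ}(x) tⁿ/n!) · (e^{dt}+1) = 2 e^{xt} · Σ_{a=0}^{d-1} (-1)^a χ(a) e^{at}`. -/
def IsGenEuler (d : ℕ) (χ : ℤ → ℂ) (E : ℕ → ℂ → ℂ) : Prop :=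
  ∀ x : ℂ, (PowerSeries.mk fun n => E n x / n.factorial) * (expPS (d : ℂ) + 1)
    = (2 : PowerSeries ℂ) * expPS x * altSum χ d

/-- The alternating generalized power sum `T_k(n,χ) = Σ_{a=0}^{n} (-1)^a χ(a) a^k`
(with the convention `0^0 = 1`). -/
noncomputable def altPowSum (χ : ℤ → ℂ) (k n : ℕ) : ℂ :=
  ∑ a ∈ Finset.range (n + 1), (-1 : ℂ) ^ a * χ (a : ℤ) * (a : ℂ) ^ k

/-- The multinomial coefficient `(k+l+m)! / (k! l! m!)`. -/
def multinom (k l m : ℕ) : ℕ :=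
  (k + l + m).factorial / (k.factorial * l.factorial * m.factorial)

/- ### Auxiliary lemmas -/

lemma expPS_eq (c : ℂ) : expPS c = PowerSeries.rescale c (PowerSeries.exp ℂ) := by
  ext n
  simp [expPS, PowerSeries.coeff_rescale, PowerSeries.coeff_exp, div_eq_mul_inv]

lemma expPS_mul (a b : ℂ) : expPS a * expPS b = expPS (a + b) := by
  simp only [expPS_eq]
  exact PowerSeries.exp_mul_exp_eq_exp_add a b

lemma expPS_zero : expPS 0 = 1 := by
  ext n
  simp [expPS, PowerSeries.coeff_one]
  rcases n with _ | n <;> simp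

lemma expPS_pow (c : ℂ) (j : ℕ) : expPS c ^ j = expPS (j * c) := by
  induction j with
  | zero => simp [expPS_zero]
  | succ j ih =>
    rw [pow_succ, ih, expPS_mul]
    push_cast; ring_nf

lemma constantCoeff_expPS (c : ℂ) : PowerSeries.constantCoeff (R := ℂ) (expPS c) = 1 := by
  simp [expPS, ← PowerSeries.coeff_zero_eq_constantCoeff_apply]

lemma expPS_add_one_ne_zero (c : ℂ) : expPS c + 1 ≠ 0 := by
  intro h
  have := congrArg (PowerSeries.constantCoeff (R := ℂ)) h
  simp [constantCoeff_expPS] at this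

noncomputable def Gser (w : ℕ) (c : ℂ) : PowerSeries ℂ :=
  ∑ j ∈ range w, ((-1 : ℂ) ^ j) • expPS (j * c)

lemma neg_expPS_pow (c : ℂ) (j : ℕ) :
    (-expPS c) ^ j = ((-1 : ℂ) ^ j) • expPS (j * c) := by
  rw [neg_pow, expPS_pow, PowerSeries.smul_eq_C_mul, map_pow, map_neg, map_one]

lemma Gser_mul (w : ℕ) (hw : Odd w) (c : ℂ) :
    (expPS c + 1) * Gser w c = expPS (w * c) + 1 := by
  have hgeom := geom_sum_mul (-expPS c) w
  simp only [neg_expPS_pow] at hgeom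
  have : Gser w c * (-expPS c - 1) = -expPS (w * c) - 1 := by
    rw [Gser, hgeom, hw.neg_pow, one_pow, neg_smul, one_smul]
  linear_combination -this

lemma sum_range_mul' {M : Type*} [AddCommMonoid M] (f : ℕ → M) (w d : ℕ) :
    ∑ b ∈ range (w * d), f b = ∑ j ∈ range w, ∑ a ∈ range d, f (j * d + a) := by
  induction w with
  | zero => simp
  | succ w ih =>
    rw [Nat.succ_mul, Finset.sum_range_add, ih, Finset.sum_range_succ]

lemma chi_per (d : ℕ) (χ : ℤ → ℂ) (hper : ∀ a : ℤ, χ (a + d) = χ a) (a : ℤ) (j : ℕ) :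
    χ (a + j * d) = χ a := by
  induction j with
  | zero => simp
  | succ j ih =>
    have : a + (j + 1 : ℕ) * d = (a + j * d) + d := by push_cast; ring
    rw [this, hper, ih]

noncomputable def Sser (χ : ℤ → ℂ) (d : ℕ) (c : ℂ) : PowerSeries ℂ :=
  ∑ a ∈ range d, ((-1 : ℂ) ^ a * χ (a : ℤ)) • expPS (a * c)

noncomputable def Tser (χ : ℤ → ℂ) (m : ℕ) (c : ℂ) : PowerSeries ℂ :=
  PowerSeries.mk fun k => altPowSum χ k (m - 1) * c ^ k / k.factorial

lemma Tser_eq (χ : ℤ → ℂ) (m : ℕ) (hm : 0 < m) (c : ℂ) :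
    Tser χ m c = ∑ b ∈ range m, ((-1 : ℂ) ^ b * χ (b : ℤ)) • expPS (b * c) := by
  ext k
  rw [Tser, PowerSeries.coeff_mk, map_sum]
  have hm1 : m - 1 + 1 = m := Nat.succ_pred_eq_of_pos hm
  rw [altPowSum, hm1, Finset.sum_mul, Finset.sum_div]
  refine Finset.sum_congr rfl fun b _ => ?_
  rw [LinearMap.map_smul]
  simp only [expPS, PowerSeries.coeff_mk, smul_eq_mul, mul_pow]
  ring

lemma Tser_split (d : ℕ) (hd : Odd d) (χ : ℤ → ℂ) (hper : ∀ a : ℤ, χ (a + d) = χ a)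
    (w : ℕ) (c : ℂ) :
    ∑ b ∈ range (w * d), ((-1 : ℂ) ^ b * χ (b : ℤ)) • expPS (b * c)
      = Sser χ d c * Gser w (d * c) := by
  rw [Sser, Gser, Finset.sum_mul_sum, sum_range_mul', Finset.sum_comm]
  refine Finset.sum_congr rfl fun a ha => Finset.sum_congr rfl fun j hj => ?_
  rw [smul_mul_smul_comm, expPS_mul]
  congr 1
  · rw [pow_add, pow_mul', hd.neg_one_pow]
    push_cast
    rw [add_comm ((j:ℤ) * d) (a:ℤ), chi_per d χ hper a j]
    ring
  · push_cast
    ring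

lemma triple_coeff (P Q R : PowerSeries ℂ) (n : ℕ) :
    PowerSeries.coeff (R := ℂ) n (P * Q * R)
      = ∑ k ∈ range (n + 1), ∑ l ∈ range (n + 1 - k),
          PowerSeries.coeff (R := ℂ) k P * PowerSeries.coeff (R := ℂ) l Q *
            PowerSeries.coeff (R := ℂ) (n - k - l) R := by
  rw [mul_assoc, PowerSeries.coeff_mul, Finset.Nat.sum_antidiagonal_eq_sum_range_succ_mk]
  refine Finset.sum_congr rfl fun k hk => ?_
  rw [PowerSeries.coeff_mul, Finset.Nat.sum_antidiagonal_eq_sum_range_succ_mk, Finset.mul_sum]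
  have hk' : k ≤ n := Nat.lt_succ_iff.mp (Finset.mem_range.mp hk)
  have : n + 1 - k = n - k + 1 := by omega
  rw [this]
  refine Finset.sum_congr rfl fun l hl => ?_
  rw [mul_assoc]

lemma multinom_cast (k l m : ℕ) :
    (multinom k l m : ℂ) * (k.factorial * l.factorial * m.factorial)
      = (k + l + m).factorial := by
  have hdvd : k.factorial * l.factorial * m.factorial ∣ (k + l + m).factorial := by
    have h1 : l.factorial * m.factorial ∣ (l + m).factorial :=
      Nat.factorial_mul_factorial_dvd_factorial_add l m
    have h2 : k.factorial * (l + m).factorial ∣ (k + (l + m)).factorial :=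
      Nat.factorial_mul_factorial_dvd_factorial_add k (l + m)
    have := dvd_trans (mul_dvd_mul_left k.factorial h1) h2
    rwa [← mul_assoc, ← add_assoc] at this
  rw [multinom]
  push_cast [Nat.div_mul_cancel hdvd, ← Nat.cast_mul]
  rfl

lemma main_sum (χ : ℤ → ℂ) (m1 m2 m3 : ℕ) (c1 c2 c3 : ℂ) (n : ℕ) :
    (∑ k ∈ range (n + 1), ∑ l ∈ range (n + 1 - k),
      (multinom k l (n - k - l) : ℂ) * altPowSum χ k (m1 - 1) *
        altPowSum χ l (m2 - 1) * altPowSum χ (n - k - l) (m3 - 1) *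
        c1 ^ k * c2 ^ l * c3 ^ (n - k - l))
    = (n.factorial : ℂ) *
        PowerSeries.coeff (R := ℂ) n (Tser χ m1 c1 * Tser χ m2 c2 * Tser χ m3 c3) := by
  rw [triple_coeff, Finset.mul_sum]
  refine Finset.sum_congr rfl fun k hk => ?_
  rw [Finset.mul_sum]
  refine Finset.sum_congr rfl fun l hl => ?_
  simp only [Tser, PowerSeries.coeff_mk]
  have hk' : k ≤ n := Nat.lt_succ_iff.mp (Finset.mem_range.mp hk)
  have hl' : l ≤ n - k := by
    have := Finset.mem_range.mp hl; omega
  have hn : k + l + (n - k - l) = n := by omega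
  have hmc := multinom_cast k l (n - k - l)
  rw [hn] at hmc
  have h1 : (k.factorial : ℂ) ≠ 0 := Nat.cast_ne_zero.mpr k.factorial_ne_zero
  have h2 : (l.factorial : ℂ) ≠ 0 := Nat.cast_ne_zero.mpr l.factorial_ne_zero
  have h3 : ((n - k - l).factorial : ℂ) ≠ 0 :=
    Nat.cast_ne_zero.mpr (n - k - l).factorial_ne_zero
  field_simp
  linear_combination (altPowSum χ k (m1 - 1) * altPowSum χ l (m2 - 1) *
    altPowSum χ (n - k - l) (m3 - 1) * c1 ^ k * c2 ^ l * c3 ^ (n - k - l)) * hmc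

lemma Gser_key (d : ℕ) (hd0 : 0 < d) (w1 w2 w3 : ℕ)
    (hw1o : Odd w1) (hw2o : Odd w2) (hw3o : Odd w3) :
    Gser w1 ((d : ℂ) * w3) * Gser w2 ((d : ℂ) * w1) * Gser w3 ((d : ℂ) * w2)
      = Gser w1 ((d : ℂ) * w2) * Gser w3 ((d : ℂ) * w1) * Gser w2 ((d : ℂ) * w3) := by
  have hU : (expPS ((d : ℂ) * w1) + 1) * ((expPS ((d : ℂ) * w2) + 1) *
      (expPS ((d : ℂ) * w3) + 1)) ≠ 0 :=
    mul_ne_zero (expPS_add_one_ne_zero _)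
      (mul_ne_zero (expPS_add_one_ne_zero _) (expPS_add_one_ne_zero _))
  apply mul_left_cancel₀ hU
  have h1 := Gser_mul w1 hw1o ((d : ℂ) * w3)
  have h2 := Gser_mul w2 hw2o ((d : ℂ) * w1)
  have h3 := Gser_mul w3 hw3o ((d : ℂ) * w2)
  have h4 := Gser_mul w1 hw1o ((d : ℂ) * w2)
  have h5 := Gser_mul w3 hw3o ((d : ℂ) * w1)
  have h6 := Gser_mul w2 hw2o ((d : ℂ) * w3)
  have e1 : (w1 : ℂ) * ((d : ℂ) * w3) = (w3 : ℂ) * ((d : ℂ) * w1) := by ring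
  have e2 : (w2 : ℂ) * ((d : ℂ) * w1) = (w1 : ℂ) * ((d : ℂ) * w2) := by ring
  have e3 : (w3 : ℂ) * ((d : ℂ) * w2) = (w2 : ℂ) * ((d : ℂ) * w3) := by ring
  calc (expPS ((d : ℂ) * w1) + 1) * ((expPS ((d : ℂ) * w2) + 1) * (expPS ((d : ℂ) * w3) + 1)) *
        (Gser w1 ((d : ℂ) * w3) * Gser w2 ((d : ℂ) * w1) * Gser w3 ((d : ℂ) * w2))
      = ((expPS ((d:ℂ)*w3) + 1) * Gser w1 ((d:ℂ)*w3)) *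
          (((expPS ((d:ℂ)*w1) + 1) * Gser w2 ((d:ℂ)*w1)) *
            ((expPS ((d:ℂ)*w2) + 1) * Gser w3 ((d:ℂ)*w2))) := by ring
    _ = (expPS ((w1:ℂ)*((d:ℂ)*w3)) + 1) * ((expPS ((w2:ℂ)*((d:ℂ)*w1)) + 1) *
          (expPS ((w3:ℂ)*((d:ℂ)*w2)) + 1)) := by rw [h1, h2, h3]
    _ = (expPS ((w1:ℂ)*((d:ℂ)*w2)) + 1) * ((expPS ((w3:ℂ)*((d:ℂ)*w1)) + 1) *
          (expPS ((w2:ℂ)*((d:ℂ)*w3)) + 1)) := by rw [e1, e2, e3]; ring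
    _ = ((expPS ((d:ℂ)*w2) + 1) * Gser w1 ((d:ℂ)*w2)) *
          (((expPS ((d:ℂ)*w1) + 1) * Gser w3 ((d:ℂ)*w1)) *
            ((expPS ((d:ℂ)*w3) + 1) * Gser w2 ((d:ℂ)*w3))) := by rw [h4, h5, h6]
    _ = (expPS ((d : ℂ) * w1) + 1) * ((expPS ((d : ℂ) * w2) + 1) * (expPS ((d : ℂ) * w3) + 1)) *
        (Gser w1 ((d : ℂ) * w2) * Gser w3 ((d : ℂ) * w1) * Gser w2 ((d : ℂ) * w3)) := by ring

/-- Theorem 8: two symmetries for the triple sum with three alternating generalized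
power sum factors. -/
theorem stmt_7 (d : ℕ) (hd : Odd d) (hd0 : 0 < d) (χ : ℤ → ℂ)
    (hper : ∀ a : ℤ, χ (a + d) = χ a)
    (hmul : ∀ a b : ℤ, χ (a * b) = χ a * χ b) (hone : χ 1 = 1)
    (hvan : ∀ a : ℤ, 1 < Int.gcd a d → χ a = 0)
    (w1 w2 w3 : ℕ) (hw1 : 0 < w1) (hw2 : 0 < w2) (hw3 : 0 < w3)
    (hw1o : Odd w1) (hw2o : Odd w2) (hw3o : Odd w3) (n : ℕ) :
    (∑ k ∈ range (n + 1), ∑ l ∈ range (n + 1 - k),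
      (multinom k l (n - k - l) : ℂ) * altPowSum χ k (w1 * d - 1) *
        altPowSum χ l (w2 * d - 1) * altPowSum χ (n - k - l) (w3 * d - 1) *
        (w3 : ℂ) ^ k * (w1 : ℂ) ^ l * (w2 : ℂ) ^ (n - k - l))
    = ∑ k ∈ range (n + 1), ∑ l ∈ range (n + 1 - k),
      (multinom k l (n - k - l) : ℂ) * altPowSum χ k (w1 * d - 1) *
        altPowSum χ l (w3 * d - 1) * altPowSum χ (n - k - l) (w2 * d - 1) *
        (w2 : ℂ) ^ k * (w1 : ℂ) ^ l * (w3 : ℂ) ^ (n - k - l) := by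
  have hT : ∀ w : ℕ, 0 < w → ∀ c : ℂ,
      Tser χ (w * d) c = Sser χ d c * Gser w ((d : ℂ) * c) := by
    intro w hw c
    rw [Tser_eq χ (w * d) (Nat.mul_pos hw hd0) c, Tser_split d hd χ hper w c]
  have key : Tser χ (w1 * d) (w3 : ℂ) * Tser χ (w2 * d) (w1 : ℂ) * Tser χ (w3 * d) (w2 : ℂ)
      = Tser χ (w1 * d) (w2 : ℂ) * Tser χ (w3 * d) (w1 : ℂ) * Tser χ (w2 * d) (w3 : ℂ) := by
    rw [hT w1 hw1 (w3 : ℂ), hT w2 hw2 (w1 : ℂ), hT w3 hw3 (w2 : ℂ),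
      hT w1 hw1 (w2 : ℂ), hT w3 hw3 (w1 : ℂ), hT w2 hw2 (w3 : ℂ)]
    linear_combination (Sser χ d (w1 : ℂ) * Sser χ d (w2 : ℂ) * Sser χ d (w3 : ℂ)) *
      Gser_key d hd0 w1 w2 w3 hw1o hw2o hw3o
  rw [main_sum χ (w1 * d) (w2 * d) (w3 * d) (w3 : ℂ) (w1 : ℂ) (w2 : ℂ) n,
    main_sum χ (w1 * d) (w3 * d) (w2 * d) (w2 : ℂ) (w1 : ℂ) (w3 : ℂ) n, key]
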